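/- (First part of Lemma 2.4.) Let θ ∈ ℚ_p \ {0} and let η be the indicator function of ℤ_p^d (note ℤ_p^d has measure 1, so ‖η‖₂ = 1). For X, Y, Z ∈ ℚ_p^{2d} with Z = (c,ζ), define the Wigner function W_{X,Y}^θ(Z) := ∫_{ℚ_p^d} conj((U_θ(X)η)(z)) · ψ(2θ^{-1}⟨ζ, z − c⟩) · (U_θ(Y)η)(2c − z) dz. Then |W_{X,Y}^θ(Z)| = 1 if Z_θ − (X_θ + Y_θ)/2 ∈ ℤ_p^{2d}, and |W_{X,Y}^θ(Z)| = 0 otherwise, where for X = (x,ξ) one sets X_θ := (x, θ^{-1}ξ). (For odd p, the paper's factor |2|_p^d equals 1 and (½ℤ_p)^d × (½ℤ_p)^d = ℤ_p^{2d}.) -/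

import Mathlib

open MeasureTheory Complex

noncomputable section

variable {p : ℕ} [Fact p.Prime]

/-- Borel measurable structure on the `p`-adic numbers. -/
instance : MeasurableSpace ℚ_[p] := borel _
instance : BorelSpace ℚ_[p] := ⟨rfl⟩

/-- The `p`-adic phase space `ℚ_p^d × ℚ_p^d  (= ℚ_p^{2d})`. -/
abbrev PadicPhase (p : ℕ) [Fact p.Prime] (d : ℕ) : Type :=
  (Fin d → ℚ_[p]) × (Fin d → ℚ_[p])

/-- `μ₀(X) = max {1, max_i |x_i|_p, max_i |ξ_i|_p}` (the Pi-norm is the sup-norm). -/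
def mu0 {d : ℕ} (X : PadicPhase p d) : ℝ := max 1 (max ‖X.1‖ ‖X.2‖)

/-- The standard symplectic form `[X,Y] = ⟨y,ξ⟩ − ⟨x,η⟩` for `X = (x,ξ)`, `Y = (y,η)`. -/
def symp {d : ℕ} (X Y : PadicPhase p d) : ℚ_[p] :=
  (∑ i, Y.1 i * X.2 i) - (∑ i, X.1 i * Y.2 i)

/-- `ψ : ℚ_p → ℂ` is a continuous additive character of modulus one, trivial on `ℤ_p`
but nontrivial on `p⁻¹ℤ_p` (i.e. of conductor `ℤ_p`). -/
structure IsStdChar (p : ℕ) [Fact p.Prime] (ψ : ℚ_[p] → ℂ) : Prop where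
  continuous : Continuous ψ
  map_add : ∀ x y : ℚ_[p], ψ (x + y) = ψ x * ψ y
  norm_one : ∀ x : ℚ_[p], ‖ψ x‖ = 1
  trivial_on_int : ∀ x : ℚ_[p], ‖x‖ ≤ 1 → ψ x = 1
  nontrivial : ∃ x : ℚ_[p], ‖x‖ ≤ (p : ℝ) ∧ ψ x ≠ 1

/-- The Schrödinger representation: `(U_θ(X)φ)(y) = ψ(θ⁻¹⟨ξ, y − x/2⟩) φ(y − x)` for
`X = (x,ξ)`. -/
def schrodinger {p : ℕ} [Fact p.Prime] {d : ℕ} (ψ : ℚ_[p] → ℂ) (θ : ℚ_[p])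
    (X : PadicPhase p d) (φ : (Fin d → ℚ_[p]) → ℂ) (y : Fin d → ℚ_[p]) : ℂ :=
  ψ (θ⁻¹ * ∑ i, X.2 i * (y i - X.1 i / 2)) * φ (y - X.1)

/-- The normalized indicator function of `ℤ_p^d` (it has `L²`-norm one). -/
def unitInd {p : ℕ} [Fact p.Prime] {d : ℕ} : (Fin d → ℚ_[p]) → ℂ :=
  fun y => if ‖y‖ ≤ 1 then 1 else 0

/-- The Wigner function of the pair of coherent states `(U_θ(X)η, U_θ(Y)η)`:
`W_{X,Y}^θ(Z) = ∫ conj((U_θ(X)η)(z)) ψ(2θ⁻¹⟨ζ, z−c⟩) (U_θ(Y)η)(2c−z) dz` for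
`Z = (c,ζ)`. -/
def wigner {p : ℕ} [Fact p.Prime] {d : ℕ} (ν : Measure (Fin d → ℚ_[p]))
    (ψ : ℚ_[p] → ℂ) (θ : ℚ_[p]) (X Y Z : PadicPhase p d) : ℂ :=
  ∫ z, (starRingEnd ℂ) (schrodinger ψ θ X unitInd z) *
      ψ (2 * θ⁻¹ * ∑ i, Z.2 i * (z i - Z.1 i)) *
      schrodinger ψ θ Y unitInd (fun i => 2 * Z.1 i - z i) ∂ν

/-- The rescaling `X = (x,ξ) ↦ X_θ = (x, θ⁻¹ξ)`. -/
def thetaScale {p : ℕ} [Fact p.Prime] {d : ℕ} (θ : ℚ_[p]) (X : PadicPhase p d) :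
    PadicPhase p d := (X.1, θ⁻¹ • X.2)

namespace WignerAux

variable {p : ℕ} [Fact p.Prime]

lemma psi_zero {ψ : ℚ_[p] → ℂ} (hψ : IsStdChar p ψ) : ψ 0 = 1 :=
  hψ.trivial_on_int 0 (by simp)

lemma psi_ne_zero {ψ : ℚ_[p] → ℂ} (hψ : IsStdChar p ψ) (a : ℚ_[p]) : ψ a ≠ 0 := by
  intro h
  have := hψ.norm_one a
  rw [h] at this
  simp at this

lemma psi_neg {ψ : ℚ_[p] → ℂ} (hψ : IsStdChar p ψ) (a : ℚ_[p]) :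
    ψ (-a) = (starRingEnd ℂ) (ψ a) := by
  have h1 : ψ a * ψ (-a) = 1 := by
    rw [← hψ.map_add, add_neg_cancel, psi_zero hψ]
  have h2 : ψ a * (starRingEnd ℂ) (ψ a) = 1 := by
    rw [Complex.mul_conj]
    norm_cast
    rw [Complex.normSq_eq_norm_sq, hψ.norm_one]
    norm_num
  exact mul_left_cancel₀ (psi_ne_zero hψ a) (h1.trans h2.symm)

lemma norm_two (hp : Odd p) : ‖(2 : ℚ_[p])‖ = 1 := by
  have h2 : ¬ ((p : ℤ) ∣ 2) := by
    intro h
    have hp2 : p ∣ 2 := by exact_mod_cast h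
    have := (Nat.prime_dvd_prime_iff_eq Fact.out Nat.prime_two).mp hp2
    subst this; simp [Nat.odd_iff] at hp
  have key := Padic.norm_intCast_lt_one_iff (p := p) (k := 2)
  have h1 : ‖((2 : ℤ) : ℚ_[p])‖ ≤ 1 := Padic.norm_int_le_one 2
  have h3 : ¬ ‖((2 : ℤ) : ℚ_[p])‖ < 1 := fun h => h2 (key.mp h)
  have := le_antisymm h1 (not_lt.mp h3)
  exact_mod_cast this

lemma p_le_norm (x : ℚ_[p]) (hx : 1 < ‖x‖) : (p : ℝ) ≤ ‖x‖ := by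
  have hx0 : x ≠ 0 := by rintro rfl; norm_num at hx
  rw [Padic.norm_eq_zpow_neg_valuation hx0] at *
  have hp1 : (1 : ℝ) < p := by exact_mod_cast (Fact.out : p.Prime).one_lt
  have hval : (1 : ℤ) ≤ -x.valuation := by
    by_contra h
    push_neg at h
    have h0 : -x.valuation ≤ 0 := by omega
    have := zpow_le_one_of_nonpos₀ hp1.le h0
    linarith
  calc (p : ℝ) = (p : ℝ) ^ (1 : ℤ) := by simp
  _ ≤ (p : ℝ) ^ (-x.valuation) := zpow_le_zpow_right₀ hp1.le hval

lemma ball_add {d : ℕ} {a b : Fin d → ℚ_[p]} (ha : ‖a‖ ≤ 1) (hb : ‖b‖ ≤ 1) :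
    ‖a + b‖ ≤ 1 := by
  rw [pi_norm_le_iff_of_nonneg zero_le_one] at *
  intro i
  refine le_trans (le_trans (le_of_eq (by simp)) (Padic.nonarchimedean (a i) (b i))) ?_
  exact max_le (ha i) (hb i)

lemma ball_measurable {d : ℕ} : MeasurableSet {u : Fin d → ℚ_[p] | ‖u‖ ≤ 1} := by
  have : {u : Fin d → ℚ_[p] | ‖u‖ ≤ 1} = Metric.closedBall 0 1 := by
    ext u; simp [Metric.mem_closedBall, dist_zero_right]
  rw [this]; exact measurableSet_closedBall

open MeasureTheory in
/-- The key character-integral computation over `ℤ_p^d`. -/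
lemma integral_char {d : ℕ} (ν : Measure (Fin d → ℚ_[p])) [ν.IsAddHaarMeasure]
    (hν : ν {x : Fin d → ℚ_[p] | ‖x‖ ≤ 1} = 1)
    {ψ : ℚ_[p] → ℂ} (hψ : IsStdChar p ψ) (w : Fin d → ℚ_[p]) :
    ∫ u, (if ‖u‖ ≤ 1 then ψ (∑ i, w i * u i) else 0) ∂ν
      = if ‖w‖ ≤ 1 then 1 else 0 := by
  by_cases hw : ‖w‖ ≤ 1
  · rw [if_pos hw]
    have hpt : ∀ u : Fin d → ℚ_[p],
        (if ‖u‖ ≤ 1 then ψ (∑ i, w i * u i) else 0)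
          = Set.indicator {u : Fin d → ℚ_[p] | ‖u‖ ≤ 1} (fun _ => (1 : ℂ)) u := by
      intro u
      simp only [Set.indicator_apply, Set.mem_setOf_eq]
      by_cases hu : ‖u‖ ≤ 1
      · simp only [hu, if_true]
        refine hψ.trivial_on_int _ ?_
        refine IsUltrametricDist.norm_sum_le_of_forall_le_of_nonneg zero_le_one ?_
        intro i _
        rw [norm_mul]
        calc ‖w i‖ * ‖u i‖ ≤ 1 * 1 := by
              refine mul_le_mul ?_ ?_ (norm_nonneg _) zero_le_one
              · exact le_trans (norm_le_pi_norm w i) hw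
              · exact le_trans (norm_le_pi_norm u i) hu
        _ = 1 := by norm_num
      · simp only [hu, if_false]
    rw [integral_congr_ae (Filter.Eventually.of_forall hpt),
      integral_indicator ball_measurable, setIntegral_const, Measure.real, hν]
    simp
  · rw [if_neg hw]
    -- find a coordinate with big norm and a point where the character is nontrivial
    rw [pi_norm_le_iff_of_nonneg zero_le_one] at hw
    push_neg at hw
    obtain ⟨i, hi⟩ := hw
    obtain ⟨x₀, hx₀p, hx₀ψ⟩ := hψ.nontrivial
    have hwi : w i ≠ 0 := by
      intro h; rw [h] at hi; norm_num at hi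
    set t : ℚ_[p] := x₀ / w i with ht
    have hti : ‖t‖ ≤ 1 := by
      rw [ht, norm_div, div_le_one (lt_trans one_pos hi)]
      exact le_trans hx₀p (p_le_norm _ hi)
    set u₀ : Fin d → ℚ_[p] := fun j => if j = i then t else 0 with hu₀
    have hu₀n : ‖u₀‖ ≤ 1 := by
      rw [pi_norm_le_iff_of_nonneg zero_le_one]
      intro j
      by_cases hj : j = i <;> simp [hu₀, hj, hti]
    have hsum : ∀ u : Fin d → ℚ_[p], ∑ j, w j * (u + u₀) j = (∑ j, w j * u j) + x₀ := by
      intro u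
      have : ∑ j, w j * (u + u₀) j = ∑ j, (w j * u j + w j * u₀ j) := by
        refine Finset.sum_congr rfl fun j _ => ?_
        simp [mul_add]
      rw [this, Finset.sum_add_distrib]
      congr 1
      rw [Finset.sum_eq_single_of_mem i (Finset.mem_univ i)]
      · simp only [hu₀, if_pos rfl]
        rw [ht]; field_simp
      · intro j _ hj; simp [hu₀, hj]
    set f : (Fin d → ℚ_[p]) → ℂ := fun u => if ‖u‖ ≤ 1 then ψ (∑ j, w j * u j) else 0 with hf
    have hfe : ∀ u, f (u + u₀) = ψ x₀ * f u := by
      intro u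
      have hiff : ‖u + u₀‖ ≤ 1 ↔ ‖u‖ ≤ 1 := by
        constructor
        · intro h
          have := ball_add h (by rw [norm_neg]; exact hu₀n : ‖-u₀‖ ≤ 1)
          simpa using this
        · intro h; exact ball_add h hu₀n
      by_cases hu : ‖u‖ ≤ 1
      · rw [hf]
        simp only [hiff.mpr hu |> if_pos, if_pos hu, hsum u, hψ.map_add]
        ring
      · rw [hf]
        simp only [if_neg (fun h => hu (hiff.mp h)), if_neg hu, mul_zero]
    have htrans : ∫ u, f (u + u₀) ∂ν = ∫ u, f u ∂ν := integral_add_right_eq_self f u₀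
    rw [integral_congr_ae (Filter.Eventually.of_forall hfe), integral_const_mul] at htrans
    have : (ψ x₀ - 1) * ∫ u, f u ∂ν = 0 := by rw [sub_mul, htrans, one_mul, sub_self]
    rcases mul_eq_zero.mp this with h | h
    · exact absurd (sub_eq_zero.mp h) hx₀ψ
    · exact h

end WignerAux

open WignerAux


/-- First part of Lemma 2.4: `|W_{X,Y}^θ(Z)| = 1` if `Z_θ − (X_θ + Y_θ)/2 ∈ ℤ_p^{2d}`
and `|W_{X,Y}^θ(Z)| = 0` otherwise. -/
theorem wigner_abs {p : ℕ} [Fact p.Prime] (hp : Odd p)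
    {d : ℕ} (hd : 1 ≤ d)
    (ν : Measure (Fin d → ℚ_[p])) [ν.IsAddHaarMeasure]
    (hν : ν {x : Fin d → ℚ_[p] | ‖x‖ ≤ 1} = 1)
    (ψ : ℚ_[p] → ℂ) (hψ : IsStdChar p ψ)
    (θ : ℚ_[p]) (hθ : θ ≠ 0)
    (X Y Z : PadicPhase p d) :
    ((thetaScale θ Z - (2 : ℚ_[p])⁻¹ • (thetaScale θ X + thetaScale θ Y)) ∈
        {T : PadicPhase p d | ‖T.1‖ ≤ 1 ∧ ‖T.2‖ ≤ 1} →
      ‖wigner ν ψ θ X Y Z‖ = 1) ∧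
    ((thetaScale θ Z - (2 : ℚ_[p])⁻¹ • (thetaScale θ X + thetaScale θ Y)) ∉
        {T : PadicPhase p d | ‖T.1‖ ≤ 1 ∧ ‖T.2‖ ≤ 1} →
      ‖wigner ν ψ θ X Y Z‖ = 0) := by
  have h2n : (2 : ℚ_[p]) ≠ 0 := by
    intro h
    have := norm_two (p := p) hp
    rw [h] at this; norm_num at this
  set T : PadicPhase p d :=
    thetaScale θ Z - (2 : ℚ_[p])⁻¹ • (thetaScale θ X + thetaScale θ Y) with hT
  have hT1 : T.1 = Z.1 - (2 : ℚ_[p])⁻¹ • (X.1 + Y.1) := rfl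
  have hT2 : T.2 = θ⁻¹ • Z.2 - (2 : ℚ_[p])⁻¹ • (θ⁻¹ • X.2 + θ⁻¹ • Y.2) := rfl
  -- the two rescaled centers
  set v : Fin d → ℚ_[p] := fun i => 2 * Z.1 i - X.1 i - Y.1 i with hv
  set w : Fin d → ℚ_[p] := fun i => θ⁻¹ * (2 * Z.2 i - X.2 i - Y.2 i) with hw
  have hvT : v = (2 : ℚ_[p]) • T.1 := by
    funext i
    rw [hT1]
    simp only [hv, Pi.smul_apply, Pi.sub_apply, Pi.add_apply, smul_eq_mul]
    field_simp
    ring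
  have hwT : w = (2 : ℚ_[p]) • T.2 := by
    funext i
    rw [hT2]
    simp only [hw, Pi.smul_apply, Pi.sub_apply, Pi.add_apply, smul_eq_mul]
    field_simp
    ring
  have hvn : ‖v‖ = ‖T.1‖ := by
    rw [hvT, norm_smul, norm_two hp, one_mul]
  have hwn : ‖w‖ = ‖T.2‖ := by
    rw [hwT, norm_smul, norm_two hp, one_mul]
  -- the phase function
  set g : (Fin d → ℚ_[p]) → ℚ_[p] := fun z =>
    -(θ⁻¹ * ∑ i, X.2 i * (z i - X.1 i / 2)) + 2 * θ⁻¹ * ∑ i, Z.2 i * (z i - Z.1 i)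
      + θ⁻¹ * ∑ i, Y.2 i * ((2 * Z.1 i - z i) - Y.1 i / 2) with hg
  -- Step 1: rewrite the Wigner integrand
  have step1 : wigner ν ψ θ X Y Z
      = ∫ z, (if ‖z - X.1‖ ≤ 1 ∧ ‖(fun i => 2 * Z.1 i - z i) - Y.1‖ ≤ 1
          then ψ (g z) else 0) ∂ν := by
    rw [wigner]
    refine integral_congr_ae (Filter.Eventually.of_forall fun z => ?_)
    simp only [schrodinger, unitInd, hg]
    by_cases hc1 : ‖z - X.1‖ ≤ 1 <;>
      by_cases hc2 : ‖(fun i => 2 * Z.1 i - z i) - Y.1‖ ≤ 1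
    · simp only [hc1, hc2, if_true, and_self, mul_one, true_and]
      rw [hψ.map_add, hψ.map_add, psi_neg hψ]
      try ring
    · simp [hc1, hc2]
    · simp [hc1, hc2]
    · simp [hc1, hc2]
  by_cases h1 : ‖v‖ ≤ 1
  · -- centers match: reduce to the character integral
    have hcond : ∀ z : Fin d → ℚ_[p],
        (‖z - X.1‖ ≤ 1 ∧ ‖(fun i => 2 * Z.1 i - z i) - Y.1‖ ≤ 1) ↔ ‖z - X.1‖ ≤ 1 := by
      intro z
      constructor
      · exact fun h => h.1
      · intro h
        refine ⟨h, ?_⟩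
        have he : (fun i => 2 * Z.1 i - z i) - Y.1 = v + (-(z - X.1)) := by
          funext j
          simp only [hv, Pi.sub_apply, Pi.add_apply, Pi.neg_apply]
          ring
        rw [he]
        exact ball_add h1 (by rw [norm_neg]; exact h)
    have step2 : wigner ν ψ θ X Y Z
        = ∫ z, (if ‖z - X.1‖ ≤ 1 then ψ (g z) else 0) ∂ν := by
      rw [step1]
      refine integral_congr_ae (Filter.Eventually.of_forall fun z => ?_)
      simp only [hcond z]
    have step3 : wigner ν ψ θ X Y Z
        = ∫ u, (if ‖u‖ ≤ 1 then ψ (g (u + X.1)) else 0) ∂ν := by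
      rw [step2, ← integral_add_right_eq_self
        (fun z => if ‖z - X.1‖ ≤ 1 then ψ (g z) else 0) X.1]
      refine integral_congr_ae (Filter.Eventually.of_forall fun u => ?_)
      simp [add_sub_cancel_right]
    have hgA : ∀ u : Fin d → ℚ_[p], g (u + X.1) = g X.1 + ∑ i, w i * u i := by
      intro u
      simp only [hg, hw, Pi.add_apply, Finset.mul_sum]
      rw [← Finset.sum_neg_distrib, ← Finset.sum_neg_distrib,
        ← Finset.sum_add_distrib, ← Finset.sum_add_distrib,
        ← Finset.sum_add_distrib, ← Finset.sum_add_distrib,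
        ← Finset.sum_add_distrib]
      refine Finset.sum_congr rfl fun i _ => ?_
      ring
    have step4 : wigner ν ψ θ X Y Z
        = ψ (g X.1) * (if ‖w‖ ≤ 1 then 1 else 0) := by
      rw [step3, ← integral_char ν hν hψ w, ← integral_const_mul]
      refine integral_congr_ae (Filter.Eventually.of_forall fun u => ?_)
      by_cases h : ‖u‖ ≤ 1
      · simp only [h, if_true, hgA u, hψ.map_add]
      · simp only [h, if_false, mul_zero]
    constructor
    · intro hmem
      have hw1 : ‖w‖ ≤ 1 := by rw [hwn]; exact hmem.2
      rw [step4, if_pos hw1, mul_one, hψ.norm_one]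
    · intro hmem
      have : ¬ ‖T.2‖ ≤ 1 := by
        intro h
        exact hmem ⟨by rw [← hvn]; exact h1, h⟩
      have hw1 : ¬ ‖w‖ ≤ 1 := by rw [hwn]; exact this
      rw [step4, if_neg hw1, mul_zero, norm_zero]
  · -- centers don't match: the integrand vanishes identically
    have hzero : wigner ν ψ θ X Y Z = 0 := by
      rw [step1]
      have : ∀ z : Fin d → ℚ_[p],
          (if ‖z - X.1‖ ≤ 1 ∧ ‖(fun i => 2 * Z.1 i - z i) - Y.1‖ ≤ 1
            then ψ (g z) else 0) = 0 := by
        intro z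
        rw [if_neg]
        rintro ⟨ha, hb⟩
        apply h1
        have he : v = (z - X.1) + ((fun i => 2 * Z.1 i - z i) - Y.1) := by
          funext j
          simp only [hv, Pi.sub_apply, Pi.add_apply]
          ring
        rw [he]
        exact ball_add ha hb
      rw [integral_congr_ae (Filter.Eventually.of_forall this), integral_zero]
    constructor
    · intro hmem
      exact absurd (by rw [hvn]; exact hmem.1) h1
    · intro _
      rw [hzero, norm_zero]
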